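/- In a tree in which each node has at most 3 children, where at every moment each node has at most 2 'open' children, closing all open rectangles in the subtree of a node at height h by traversing only open nodes visits a binary tree of height at most h and thus touches at most 2^(h+1) - 1 nodes, occupying O(2^h / B^((1-ε)/log 3)) blocks under the vEB layout. -/

import Mathlib

open Real

/-- A rooted tree whose nodes carry an `open` flag. -/
inductive OTree : Type
  | leaf (opn : Bool) : OTree
  | node (opn : Bool) (children : List OTree) : OTree

namespace OTree

def isOpen : OTree → Bool
  | .leaf b => b
  | .node b _ => b

def height : OTree → ℕ
  | .leaf _ => 0
  | .node _ cs => 1 + (cs.attach.map (fun c => height c.1)).foldr max 0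
decreasing_by
  simp only [OTree.node.sizeOf_spec]
  have := List.sizeOf_lt_of_mem c.2
  omega

/-- Number of nodes visited when traversing only open nodes from the root
    (a node is visited iff it and all its ancestors are open). -/
def openVisited : OTree → ℕ
  | .leaf b => if b then 1 else 0
  | .node b cs =>
      if b then 1 + (cs.attach.map (fun c => openVisited c.1)).sum else 0
decreasing_by
  simp only [OTree.node.sizeOf_spec]
  have := List.sizeOf_lt_of_mem c.2
  omega

/-- Each node has at most 3 children, of which at most 2 are open. -/
inductive Valid : OTree → Prop
  | leaf (b : Bool) : Valid (.leaf b)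
  | node (b : Bool) (cs : List OTree)
      (h3 : cs.length ≤ 3)
      (h2 : (cs.filter (fun c => isOpen c)).length ≤ 2)
      (hrec : ∀ c ∈ cs, Valid c) : Valid (.node b cs)

end OTree

namespace OTree

lemma openVisited_of_not_open (t : OTree) (ht : isOpen t = false) :
    openVisited t = 0 := by
  cases t with
  | leaf b => simp [isOpen] at ht; simp [openVisited, ht]
  | node b cs => simp [isOpen] at ht; simp [openVisited, ht]

lemma le_foldr_max (l : List ℕ) (a : ℕ) (ha : a ∈ l) :
    a ≤ l.foldr max 0 := by
  induction l with
  | nil => simp at ha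
  | cons x xs ih =>
    rcases List.mem_cons.mp ha with rfl | ha
    · exact le_max_left _ _
    · exact le_trans (ih ha) (le_max_right _ _)

lemma sum_le_filter_card (cs : List OTree) (M : ℕ)
    (hM : ∀ c ∈ cs, openVisited c ≤ M) :
    (cs.map openVisited).sum ≤ (cs.filter (fun c => isOpen c)).length * M := by
  induction cs with
  | nil => simp
  | cons c cs ih =>
    have ih' := ih (fun x hx => hM x (List.mem_cons_of_mem _ hx))
    by_cases hc : isOpen c = true
    · simp only [List.map_cons, List.sum_cons, List.filter_cons, hc, if_pos,
        List.length_cons]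
      have := hM c List.mem_cons_self
      calc openVisited c + (cs.map openVisited).sum
          ≤ M + (cs.filter (fun c => isOpen c)).length * M := by
            exact Nat.add_le_add this ih'
        _ = ((cs.filter (fun c => isOpen c)).length + 1) * M := by ring
    · have hc' : isOpen c = false := by simpa using hc
      simp only [List.map_cons, List.sum_cons, List.filter_cons, hc']
      rw [openVisited_of_not_open c hc']
      simpa using ih'

lemma openVisited_le (t : OTree) (hv : Valid t) :
    ∀ h : ℕ, height t ≤ h → openVisited t ≤ 2 ^ (h + 1) - 1 := by
  induction t using OTree.rec
    (motive_2 := fun cs => ∀ c ∈ cs, Valid c →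
      ∀ h : ℕ, height c ≤ h → openVisited c ≤ 2 ^ (h + 1) - 1) with
  | leaf b =>
    intro h _
    rw [openVisited]
    have h1 : (1:ℕ) ≤ 2 ^ (h+1) := Nat.one_le_two_pow
    split <;> omega
  | node b cs ih =>
    intro h hh
    cases hv with
    | node _ _ h3 h2 hrec =>
    rw [openVisited]
    by_cases hb : b = true
    · rw [if_pos hb]
      rw [height] at hh
      have hh1 : 1 ≤ h := le_trans (by omega) hh
      have hchild : ∀ c ∈ cs, height c ≤ h - 1 := by
        intro c hc
        have hmem : height c ∈ cs.attach.map (fun c => height c.1) := by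
          simp only [List.mem_map, List.mem_attach]
          exact ⟨⟨c, hc⟩, trivial, rfl⟩
        have := le_foldr_max _ _ hmem
        omega
      have hrec' : ∀ c ∈ cs, openVisited c ≤ 2 ^ h - 1 := by
        intro c hc
        have := ih c hc (hrec c hc) (h - 1) (hchild c hc)
        have : openVisited c ≤ 2 ^ (h - 1 + 1) - 1 := this
        have heq : h - 1 + 1 = h := by omega
        rwa [heq] at this
      have hmap : cs.attach.map (fun c => openVisited c.1) = cs.map openVisited := by
        rw [List.attach_map_val]
      rw [hmap]
      have hsum := sum_le_filter_card cs (2 ^ h - 1) hrec'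
      have h2p : (1:ℕ) ≤ 2 ^ h := Nat.one_le_two_pow
      have : (cs.filter (fun c => isOpen c)).length * (2 ^ h - 1) ≤ 2 * (2 ^ h - 1) :=
        Nat.mul_le_mul_right _ h2
      have hpow : 2 ^ (h + 1) = 2 * 2 ^ h := by rw [pow_succ]; ring
      omega
    · rw [if_neg hb]; omega
  | nil =>
    rename_i c hc hvx h' hh'
    simp at hc
  | cons c cs ihc ihcs =>
    rename_i x hx hvx h' hh'
    rcases List.mem_cons.mp hx with rfl | hx
    · exact ihc hvx h' hh'
    · exact ihcs x hx hvx h' hh' 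

end OTree

/-- In a tree in which each node has at most 3 children and at most 2 open
    children, closing all open rectangles in the subtree of a node at height `h`
    by traversing only open nodes visits an (induced binary) set of at most
    `2^(h+1) - 1` nodes; under the vEB layout, where an induced binary tree of
    height `h` occupies at most `C₀·(1 + 2^h/B^((1-ε)/log₂3))` blocks, these
    nodes occupy `O(2^h / B^((1-ε)/log 3))` blocks. -/
theorem close_open_rectangles_cost (t : OTree) (h : ℕ)
    (hv : OTree.Valid t) (hh : OTree.height t ≤ h) :
    OTree.openVisited t ≤ 2 ^ (h + 1) - 1 ∧
    ∀ C₀ : ℝ, 0 < C₀ → ∃ C : ℝ, 0 < C ∧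
      ∀ (B ε blocks : ℝ), 2 ≤ B → 0 < ε → ε < 1 →
        B ^ ((1 - ε) / Real.logb 2 3) ≤ (2 : ℝ) ^ h →
        blocks ≤ C₀ * (1 + (2 : ℝ) ^ h / B ^ ((1 - ε) / Real.logb 2 3)) →
        blocks ≤ C * ((2 : ℝ) ^ h / B ^ ((1 - ε) / Real.logb 2 3)) := by
  constructor
  · exact OTree.openVisited_le t hv h hh
  · intro C₀ hC₀
    refine ⟨2 * C₀, by linarith, ?_⟩
    intro B ε blocks hB hε hε1 hle hblocks
    have hBpos : (0:ℝ) < B := by linarith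
    have hden : (0:ℝ) < B ^ ((1 - ε) / Real.logb 2 3) :=
      Real.rpow_pos_of_pos hBpos _
    have h1 : (1:ℝ) ≤ (2:ℝ) ^ h / B ^ ((1 - ε) / Real.logb 2 3) := by
      rw [le_div_iff₀ hden]; linarith
    nlinarith [h1, hblocks, hC₀]
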